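/- With U_h = W_h ∩ (∑_{h' ⊊ h} W_{h'})^⊥, for every h ⊆ K one has the orthogonal direct sum decomposition W_h = ⊕_{h' ⊆ h} U_{h'}; in particular ℝ^I = ⊕_{h ⊆ K} U_h. -/

import Mathlib

open scoped RealInnerProductSpace

variable {K : Type*} [Fintype K] [DecidableEq K]

/-- The subspace `W h` of `ℝ^I` (with `I = ∏ k, Fin (I k)`, standard inner product)
consisting of functions depending only on the coordinates indexed by `h`. -/
def cellW (I : K → ℕ) (h : Finset K) :
    Submodule ℝ (EuclideanSpace ℝ (∀ k, Fin (I k))) where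
  carrier := {f | ∀ i j : ∀ k, Fin (I k), (∀ k ∈ h, i k = j k) → f i = f j}
  add_mem' := by
    intro f g hf hg i j hij
    simp only [PiLp.add_apply, hf i j hij, hg i j hij]
  zero_mem' := by intro i j _; rfl
  smul_mem' := by
    intro c f hf i j hij
    simp only [PiLp.smul_apply, hf i j hij]

/-- The interaction subspace `U h = W h ∩ (∑_{h' ⊊ h} W h')ᗮ`. -/
noncomputable def cellU (I : K → ℕ) (h : Finset K) :
    Submodule ℝ (EuclideanSpace ℝ (∀ k, Fin (I k))) :=
  cellW I h ⊓ (⨆ h' ∈ h.ssubsets, cellW I h')ᗮ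


section aux
variable (I : K → ℕ)

lemma mem_cellW {h : Finset K} {f : EuclideanSpace ℝ (∀ k, Fin (I k))} :
    f ∈ cellW I h ↔ ∀ i j : ∀ k, Fin (I k), (∀ k ∈ h, i k = j k) → f i = f j := Iff.rfl

lemma cellW_mono {h h' : Finset K} (hsub : h ⊆ h') : cellW I h ≤ cellW I h' :=
  fun f hf i j hij => hf i j fun k hk => hij k (hsub hk)

lemma cellW_univ : cellW I Finset.univ = ⊤ := by
  refine top_unique fun f _ i j hij => ?_
  have : i = j := funext fun k => hij k (Finset.mem_univ k)
  rw [this]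

def cellMerge (h : Finset K) (i j : ∀ k, Fin (I k)) : ∀ k, Fin (I k) :=
  fun k => if k ∈ h then i k else j k

def cellSwap (h : Finset K) :
    ((∀ k, Fin (I k)) × (∀ k, Fin (I k))) ≃ ((∀ k, Fin (I k)) × (∀ k, Fin (I k))) where
  toFun p := (cellMerge I h p.1 p.2, cellMerge I h p.2 p.1)
  invFun p := (cellMerge I h p.1 p.2, cellMerge I h p.2 p.1)
  left_inv p := by
    ext k <;> · simp only [cellMerge]; split <;> simp_all [cellMerge]
  right_inv p := by
    ext k <;> · simp only [cellMerge]; split <;> simp_all [cellMerge]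

lemma sum_cellMerge (h : Finset K) (F : (∀ k, Fin (I k)) → ℝ) :
    ∑ i, ∑ j, F (cellMerge I h i j) = (Fintype.card (∀ k, Fin (I k)) : ℝ) * ∑ i, F i := by
  calc ∑ i, ∑ j, F (cellMerge I h i j)
      = ∑ p : ((∀ k, Fin (I k)) × (∀ k, Fin (I k))), F (cellMerge I h p.1 p.2) :=
        (Fintype.sum_prod_type' _).symm
    _ = ∑ p : ((∀ k, Fin (I k)) × (∀ k, Fin (I k))), F ((cellSwap I h p).1) := rfl
    _ = ∑ p : ((∀ k, Fin (I k)) × (∀ k, Fin (I k))), F p.1 :=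
        Equiv.sum_comp (cellSwap I h) (fun p => F p.1)
    _ = ∑ i : (∀ k, Fin (I k)), ∑ _j : (∀ k, Fin (I k)), F i := Fintype.sum_prod_type' (fun i _ => F i)
    _ = (Fintype.card (∀ k, Fin (I k)) : ℝ) * ∑ i, F i := by
        simp [Finset.sum_const, nsmul_eq_mul, Finset.mul_sum]

noncomputable def cellAvg (h : Finset K) (f : EuclideanSpace ℝ (∀ k, Fin (I k))) :
    EuclideanSpace ℝ (∀ k, Fin (I k)) :=
  WithLp.toLp 2 (fun i => (Fintype.card (∀ k, Fin (I k)) : ℝ)⁻¹ * ∑ j, f (cellMerge I h i j))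

lemma card_ne_zero (hI : ∀ k, 1 ≤ I k) : (Fintype.card (∀ k, Fin (I k)) : ℝ) ≠ 0 := by
  have : Nonempty (∀ k, Fin (I k)) := ⟨fun k => ⟨0, hI k⟩⟩
  exact_mod_cast Fintype.card_ne_zero

lemma cellAvg_mem (h : Finset K) (f : EuclideanSpace ℝ (∀ k, Fin (I k))) :
    cellAvg I h f ∈ cellW I h := by
  intro i j hij
  show (_ : ℝ) * _ = _ * _
  congr 1
  refine Finset.sum_congr rfl fun j' _ => ?_
  refine congrArg f.ofLp ?_
  funext k
  simp only [cellMerge]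
  split
  · exact hij k ‹_›
  · rfl

lemma cellAvg_of_mem (hI : ∀ k, 1 ≤ I k) {h : Finset K}
    {f : EuclideanSpace ℝ (∀ k, Fin (I k))} (hf : f ∈ cellW I h) : cellAvg I h f = f := by
  refine PiLp.ext fun i => ?_
  show (_ : ℝ) * _ = _
  have : ∀ j : ∀ k, Fin (I k), f (cellMerge I h i j) = f i := fun j =>
    hf _ _ fun k hk => if_pos hk
  simp only [this, Finset.sum_const, nsmul_eq_mul, Finset.card_univ]
  rw [← mul_assoc, inv_mul_cancel₀ (card_ne_zero I hI), one_mul]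

lemma inner_cellAvg (hI : ∀ k, 1 ≤ I k) (h : Finset K)
    (f g : EuclideanSpace ℝ (∀ k, Fin (I k))) (hg : g ∈ cellW I h) :
    ⟪cellAvg I h f, g⟫ = ⟪f, g⟫ := by
  have hgm : ∀ i j : ∀ k, Fin (I k), g (cellMerge I h i j) = g i := fun i j =>
    hg _ _ fun k hk => if_pos hk
  rw [PiLp.inner_apply, PiLp.inner_apply]
  simp only [RCLike.inner_apply', conj_trivial]
  have : ∀ i, cellAvg I h f i * g i
      = (Fintype.card (∀ k, Fin (I k)) : ℝ)⁻¹ *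
        ∑ j, f (cellMerge I h i j) * g (cellMerge I h i j) := by
    intro i
    show ((Fintype.card (∀ k, Fin (I k)) : ℝ)⁻¹ * ∑ j, f (cellMerge I h i j)) * g i = _
    rw [mul_assoc, Finset.sum_mul]
    congr 1
    exact Finset.sum_congr rfl fun j _ => by rw [hgm i j]
  simp only [this]
  rw [← Finset.mul_sum, sum_cellMerge I h (fun m => f m * g m), ← mul_assoc,
    inv_mul_cancel₀ (card_ne_zero I hI), one_mul]

lemma cellAvg_mem_inter (h h' : Finset K) {f : EuclideanSpace ℝ (∀ k, Fin (I k))}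
    (hf : f ∈ cellW I h') : cellAvg I h f ∈ cellW I (h ∩ h') := by
  intro i i' hii'
  show (_ : ℝ) * _ = _ * _
  congr 1
  refine Finset.sum_congr rfl fun j _ => ?_
  refine hf _ _ fun k hk => ?_
  simp only [cellMerge]
  split
  · exact hii' k (Finset.mem_inter.2 ⟨‹_›, hk⟩)
  · rfl

lemma cellU_key (hI : ∀ k, 1 ≤ I k) {h h' : Finset K} (hns : ¬ h' ⊆ h)
    {x y : EuclideanSpace ℝ (∀ k, Fin (I k))}
    (hx : x ∈ cellU I h) (hy : y ∈ cellU I h') : ⟪x, y⟫ = 0 := by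
  obtain ⟨hxW, _⟩ := hx
  obtain ⟨hyW, hyO⟩ := hy
  have havg : cellAvg I h' x ∈ cellW I (h' ∩ h) := cellAvg_mem_inter I h' h hxW
  have hss : h' ∩ h ∈ h'.ssubsets := by
    rw [Finset.mem_ssubsets]
    refine ⟨Finset.inter_subset_left, fun hc => hns fun k hk => ?_⟩
    exact (Finset.mem_inter.1 (hc hk)).2
  have hle : cellW I (h' ∩ h) ≤ ⨆ s ∈ h'.ssubsets, cellW I s :=
    le_iSup₂ (f := fun s _ => cellW I s) (h' ∩ h) hss
  have h1 : ⟪cellAvg I h' x, y⟫ = 0 :=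
    (Submodule.mem_orthogonal _ y).1 hyO _ (hle havg)
  have h2 : ⟪cellAvg I h' x, y⟫ = ⟪x, y⟫ := inner_cellAvg I hI h' x y hyW
  rw [← h2, h1]

end aux

/-- Orthogonal direct sum decomposition: `W h = ⊕_{h' ⊆ h} U h'` (the `U h'` being
pairwise orthogonal); in particular, for `h = K`, `ℝ^I = ⊕_{h ⊆ K} U h`. -/
theorem cellW_eq_directSum_cellU (I : K → ℕ) (hI : ∀ k, 1 ≤ I k) :
    (∀ h h' : Finset K, h ≠ h' → ∀ x ∈ cellU I h, ∀ y ∈ cellU I h', ⟪x, y⟫ = 0) ∧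
    (∀ h : Finset K, cellW I h = ⨆ h' ∈ h.powerset, cellU I h') ∧
    (⨆ h : Finset K, cellU I h) = (⊤ : Submodule ℝ (EuclideanSpace ℝ (∀ k, Fin (I k)))) := by
  have part1 : ∀ h h' : Finset K, h ≠ h' → ∀ x ∈ cellU I h, ∀ y ∈ cellU I h', ⟪x, y⟫ = 0 := by
    intro h h' hne x hx y hy
    by_cases hc : h' ⊆ h
    · have hc' : ¬ h ⊆ h' := fun hc' => hne (Finset.Subset.antisymm hc' hc)
      rw [real_inner_comm]
      exact cellU_key I hI hc' hy hx
    · exact cellU_key I hI hc hx hy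
  have part2 : ∀ h : Finset K, cellW I h = ⨆ h' ∈ h.powerset, cellU I h' := by
    intro h
    induction h using Finset.strongInduction with
    | _ h ih =>
      set V : Submodule ℝ (EuclideanSpace ℝ (∀ k, Fin (I k))) :=
        ⨆ h' ∈ h.ssubsets, cellW I h' with hV
      have hVW : V ≤ cellW I h :=
        iSup₂_le fun s hs => cellW_mono I (Finset.mem_ssubsets.1 hs).1
      have hdecomp : V ⊔ (Vᗮ ⊓ cellW I h) = cellW I h :=
        Submodule.sup_orthogonal_inf_of_hasOrthogonalProjection hVW
      have hU : Vᗮ ⊓ cellW I h = cellU I h := by rw [inf_comm]; rfl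
      have hVU : V = ⨆ h' ∈ h.ssubsets, cellU I h' := by
        refine le_antisymm (iSup₂_le fun s hs => ?_) (iSup₂_le fun s hs => ?_)
        · rw [ih s (Finset.mem_ssubsets.1 hs)]
          refine iSup₂_le fun t ht => ?_
          refine le_iSup₂ (f := fun t _ => cellU I t) t ?_
          rw [Finset.mem_ssubsets]
          exact lt_of_le_of_lt (Finset.mem_powerset.1 ht) (Finset.mem_ssubsets.1 hs)
        · exact le_trans inf_le_left (le_iSup₂ (f := fun s _ => cellW I s) s hs)
      rw [← hdecomp, hU, hVU]
      refine le_antisymm (sup_le ?_ ?_) (iSup₂_le fun t ht => ?_)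
      · refine iSup₂_le fun t ht => ?_
        refine le_iSup₂ (f := fun t _ => cellU I t) t ?_
        rw [Finset.mem_powerset]
        exact (Finset.mem_ssubsets.1 ht).1
      · exact le_iSup₂ (f := fun t _ => cellU I t) h (Finset.mem_powerset_self h)
      · rcases eq_or_ne t h with rfl | hth
        · exact le_sup_right
        · refine le_trans ?_ le_sup_left
          refine le_iSup₂ (f := fun t _ => cellU I t) t ?_
          rw [Finset.mem_ssubsets]
          exact lt_of_le_of_ne (Finset.mem_powerset.1 ht) hth
  refine ⟨part1, part2, ?_⟩
  refine top_unique ?_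
  rw [← cellW_univ I, part2 Finset.univ]
  exact iSup₂_le fun t _ => le_iSup (fun t => cellU I t) t
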